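/- Let A ∈ ℝ^{n×n} with splitting A = M − N where M is invertible, let B ∈ ℝ^{n×n}, b ∈ ℝⁿ, θ ∈ [0,1), and let Ω ∈ ℝ^{n×n} be such that Ω + M is invertible. Suppose F(x*) = 0 and ‖M^{-1}‖ < 1/[θ(‖Ω+M‖ + ‖Ω+N‖ + ‖B‖) + ‖Ω+N‖ + ‖B‖ + ‖Ω‖]. Then any sequence {x^k} in ℝⁿ satisfying ‖(Ω+M)x^{k+1} − [(Ω+N)x^k + B|x^k| + b]‖ ≤ θ‖F(x^k)‖ for all k ≥ 0 converges linearly to x* from any starting point x^0. -/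

import Mathlib

open Matrix Filter

/-- Componentwise absolute value of a vector in Euclidean space. -/
noncomputable def vabs {n : ℕ} (x : EuclideanSpace ℝ (Fin n)) : EuclideanSpace ℝ (Fin n) :=
  WithLp.toLp 2 (fun i => |x i|)

/-- A matrix acting on Euclidean space (so that vector norms are the Euclidean 2-norm). -/
noncomputable def mulV {n : ℕ} (M : Matrix (Fin n) (Fin n) ℝ) (x : EuclideanSpace ℝ (Fin n)) :
    EuclideanSpace ℝ (Fin n) :=
  Matrix.toEuclideanCLM (𝕜 := ℝ) M x

/-- Spectral norm of a real matrix: the operator norm induced by the Euclidean vector norm. -/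
noncomputable def spec {n : ℕ} (M : Matrix (Fin n) (Fin n) ℝ) : ℝ :=
  ‖Matrix.toEuclideanCLM (𝕜 := ℝ) M‖

/-- The GAVE residual function `F(x) = A x − B |x| − b`. -/
noncomputable def gaveF {n : ℕ} (A B : Matrix (Fin n) (Fin n) ℝ)
    (b : EuclideanSpace ℝ (Fin n)) (x : EuclideanSpace ℝ (Fin n)) : EuclideanSpace ℝ (Fin n) :=
  mulV A x - mulV B (vabs x) - b

/-- The AVE residual function `A x − |x| − b` (the GAVE with `B = I`). -/
noncomputable def aveF {n : ℕ} (A : Matrix (Fin n) (Fin n) ℝ)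
    (b : EuclideanSpace ℝ (Fin n)) (x : EuclideanSpace ℝ (Fin n)) : EuclideanSpace ℝ (Fin n) :=
  mulV A x - vabs x - b

/-- A sequence converges linearly to `xs`: the distances to `xs` contract by a fixed
factor `c < 1` at every step, and the sequence tends to `xs`. -/
def ConvergesLinearlyTo {n : ℕ} (x : ℕ → EuclideanSpace ℝ (Fin n))
    (xs : EuclideanSpace ℝ (Fin n)) : Prop :=
  (∃ c : ℝ, 0 ≤ c ∧ c < 1 ∧ ∀ k : ℕ, ‖x (k + 1) - xs‖ ≤ c * ‖x k - xs‖) ∧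
    Tendsto x atTop (nhds xs)

lemma spec_nonneg {n : ℕ} (M : Matrix (Fin n) (Fin n) ℝ) : 0 ≤ spec M := norm_nonneg _

lemma mulV_norm_le {n : ℕ} (M : Matrix (Fin n) (Fin n) ℝ) (x : EuclideanSpace ℝ (Fin n)) :
    ‖mulV M x‖ ≤ spec M * ‖x‖ :=
  (Matrix.toEuclideanCLM (𝕜 := ℝ) M).le_opNorm x

lemma mulV_add_mat {n : ℕ} (P Q : Matrix (Fin n) (Fin n) ℝ) (x : EuclideanSpace ℝ (Fin n)) :
    mulV (P + Q) x = mulV P x + mulV Q x := by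
  simp [mulV, map_add]

lemma mulV_sub_mat {n : ℕ} (P Q : Matrix (Fin n) (Fin n) ℝ) (x : EuclideanSpace ℝ (Fin n)) :
    mulV (P - Q) x = mulV P x - mulV Q x := by
  simp [mulV, map_sub]

lemma mulV_sub_vec {n : ℕ} (M : Matrix (Fin n) (Fin n) ℝ) (x y : EuclideanSpace ℝ (Fin n)) :
    mulV M (x - y) = mulV M x - mulV M y :=
  map_sub _ _ _

lemma mulV_inv {n : ℕ} {M : Matrix (Fin n) (Fin n) ℝ} (hM : IsUnit M)
    (x : EuclideanSpace ℝ (Fin n)) : mulV M⁻¹ (mulV M x) = x := by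
  have h : M⁻¹ * M = 1 := Matrix.nonsing_inv_mul M ((Matrix.isUnit_iff_isUnit_det M).mp hM)
  rw [mulV, mulV, ← ContinuousLinearMap.comp_apply, ← ContinuousLinearMap.mul_def,
    ← _root_.map_mul (Matrix.toEuclideanCLM (𝕜 := ℝ)), h, _root_.map_one (Matrix.toEuclideanCLM (𝕜 := ℝ)), ContinuousLinearMap.one_apply]

lemma vabs_lip {n : ℕ} (u v : EuclideanSpace ℝ (Fin n)) : ‖vabs u - vabs v‖ ≤ ‖u - v‖ := by
  rw [EuclideanSpace.norm_eq, EuclideanSpace.norm_eq]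
  apply Real.sqrt_le_sqrt
  apply Finset.sum_le_sum
  intro i _
  have h1 : (vabs u - vabs v) i = |u i| - |v i| := rfl
  have h2 : (u - v) i = u i - v i := rfl
  rw [h1, h2]
  have h3 := abs_abs_sub_abs_le_abs_sub (u i) (v i)
  simp only [Real.norm_eq_abs]
  nlinarith [abs_nonneg (|u i| - |v i|), abs_nonneg (u i - v i)]

set_option maxHeartbeats 2000000 in
theorem stmt3 {n : ℕ} (A M N B Ω : Matrix (Fin n) (Fin n) ℝ)
    (b : EuclideanSpace ℝ (Fin n)) (hA : A = M - N) (hM : IsUnit M) (θ : ℝ)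
    (hθ0 : 0 ≤ θ) (hθ1 : θ < 1) (hinv : IsUnit (Ω + M))
    (xs : EuclideanSpace ℝ (Fin n)) (hxs : gaveF A B b xs = 0)
    (hcond : spec M⁻¹ <
      1 / (θ * (spec (Ω + M) + spec (Ω + N) + spec B) + spec (Ω + N) + spec B + spec Ω))
    (x : ℕ → EuclideanSpace ℝ (Fin n))
    (hx : ∀ k : ℕ, ‖mulV (Ω + M) (x (k + 1)) - (mulV (Ω + N) (x k) + mulV B (vabs (x k)) + b)‖ ≤
      θ * ‖gaveF A B b (x k)‖) :
    ConvergesLinearlyTo x xs := by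
  have hα0 := spec_nonneg M⁻¹
  have hΩ0 := spec_nonneg Ω
  have hB0 := spec_nonneg B
  have hOM0 := spec_nonneg (Ω + M)
  have hON0 := spec_nonneg (Ω + N)
  set α : ℝ := spec M⁻¹ with hαdef
  set S : ℝ := spec (Ω + M) + spec (Ω + N) + spec B with hSdef
  set D : ℝ := θ * S + spec (Ω + N) + spec B with hDdef
  have hS0 : 0 ≤ S := by positivity
  have hD0 : 0 ≤ D := by positivity
  have hDen : 0 < D + spec Ω := by
    rcases lt_or_eq_of_le (add_nonneg hD0 hΩ0) with h | h
    · exact h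
    · exfalso; rw [← h, div_zero] at hcond; linarith
  have hlt : α * (D + spec Ω) < 1 := by
    have h := (lt_div_iff₀ hDen).mp hcond
    linarith
  have hΩlt : α * spec Ω < 1 := by nlinarith
  have hden1 : 0 < 1 - α * spec Ω := by linarith
  set c : ℝ := α * D / (1 - α * spec Ω) with hcdef
  have hc0 : 0 ≤ c := div_nonneg (mul_nonneg hα0 hD0) hden1.le
  have hc1 : c < 1 := by rw [hcdef, div_lt_one hden1]; nlinarith
  -- fixed point equation
  have hMxs : mulV M xs = mulV N xs + mulV B (vabs xs) + b := by
    have h0 : mulV A xs - mulV B (vabs xs) - b = 0 := hxs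
    rw [hA, mulV_sub_mat, sub_sub, sub_eq_zero, sub_eq_iff_eq_add] at h0
    rw [h0]; abel
  -- contraction
  have key : ∀ k : ℕ, ‖x (k + 1) - xs‖ ≤ c * ‖x k - xs‖ := by
    intro k
    have heq : mulV M (x (k + 1) - xs) =
        mulV (Ω + N) (x k - xs) + mulV B (vabs (x k) - vabs xs)
          + (mulV (Ω + M) (x (k + 1)) - (mulV (Ω + N) (x k) + mulV B (vabs (x k)) + b))
          - mulV Ω (x (k + 1) - xs) := by
      simp only [mulV_sub_vec, mulV_add_mat, hMxs]
      abel
    have he1 : x (k + 1) - xs = mulV M⁻¹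
        (mulV (Ω + N) (x k - xs) + mulV B (vabs (x k) - vabs xs)
          + (mulV (Ω + M) (x (k + 1)) - (mulV (Ω + N) (x k) + mulV B (vabs (x k)) + b))
          - mulV Ω (x (k + 1) - xs)) := by
      rw [← heq, mulV_inv hM]
    have hdiff : gaveF A B b (x k) = mulV (Ω + M) (x k - xs) - mulV (Ω + N) (x k - xs)
        - mulV B (vabs (x k) - vabs xs) := by
      simp only [gaveF, hA, mulV_sub_mat, mulV_add_mat, mulV_sub_vec, hMxs]
      abel
    have t1 := mulV_norm_le (Ω + M) (x k - xs)
    have t2 := mulV_norm_le (Ω + N) (x k - xs)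
    have t3 := mulV_norm_le B (vabs (x k) - vabs xs)
    have t4 := vabs_lip (x k) xs
    have t3' : ‖mulV B (vabs (x k) - vabs xs)‖ ≤ spec B * ‖x k - xs‖ := by
      refine t3.trans (mul_le_mul_of_nonneg_left t4 hB0)
    have hF : ‖gaveF A B b (x k)‖ ≤ S * ‖x k - xs‖ := by
      rw [hdiff]
      have u1 := norm_sub_le (mulV (Ω + M) (x k - xs) - mulV (Ω + N) (x k - xs))
        (mulV B (vabs (x k) - vabs xs))
      have u2 := norm_sub_le (mulV (Ω + M) (x k - xs)) (mulV (Ω + N) (x k - xs))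
      rw [hSdef]; ring_nf; nlinarith [norm_nonneg (x k - xs)]
    have hr : ‖mulV (Ω + M) (x (k + 1)) - (mulV (Ω + N) (x k) + mulV B (vabs (x k)) + b)‖ ≤
        θ * (S * ‖x k - xs‖) := (hx k).trans (mul_le_mul_of_nonneg_left hF hθ0)
    have tΩ := mulV_norm_le Ω (x (k + 1) - xs)
    have tinv := mulV_norm_le M⁻¹
        (mulV (Ω + N) (x k - xs) + mulV B (vabs (x k) - vabs xs)
          + (mulV (Ω + M) (x (k + 1)) - (mulV (Ω + N) (x k) + mulV B (vabs (x k)) + b))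
          - mulV Ω (x (k + 1) - xs))
    have u3 := norm_sub_le (mulV (Ω + N) (x k - xs) + mulV B (vabs (x k) - vabs xs)
          + (mulV (Ω + M) (x (k + 1)) - (mulV (Ω + N) (x k) + mulV B (vabs (x k)) + b)))
        (mulV Ω (x (k + 1) - xs))
    have u4 := norm_add_le (mulV (Ω + N) (x k - xs) + mulV B (vabs (x k) - vabs xs))
        (mulV (Ω + M) (x (k + 1)) - (mulV (Ω + N) (x k) + mulV B (vabs (x k)) + b))
    have u5 := norm_add_le (mulV (Ω + N) (x k - xs)) (mulV B (vabs (x k) - vabs xs))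
    have hbig : ‖mulV (Ω + N) (x k - xs) + mulV B (vabs (x k) - vabs xs)
          + (mulV (Ω + M) (x (k + 1)) - (mulV (Ω + N) (x k) + mulV B (vabs (x k)) + b))
          - mulV Ω (x (k + 1) - xs)‖ ≤
          spec (Ω + N) * ‖x k - xs‖ + spec B * ‖x k - xs‖ + θ * (S * ‖x k - xs‖)
          + spec Ω * ‖x (k + 1) - xs‖ := by
      linarith
    have hmain : ‖x (k + 1) - xs‖ ≤
        α * (spec (Ω + N) * ‖x k - xs‖ + spec B * ‖x k - xs‖ + θ * (S * ‖x k - xs‖)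
          + spec Ω * ‖x (k + 1) - xs‖) := by
      have h2 := tinv.trans (mul_le_mul_of_nonneg_left hbig hα0)
      rwa [← he1] at h2
    rw [hcdef, div_mul_eq_mul_div, le_div_iff₀ hden1, hDdef]
    have hek := norm_nonneg (x k - xs)
    have hek1 := norm_nonneg (x (k + 1) - xs)
    nlinarith
  refine ⟨⟨c, hc0, hc1, key⟩, ?_⟩
  have hbound : ∀ k : ℕ, ‖x k - xs‖ ≤ c ^ k * ‖x 0 - xs‖ := by
    intro k
    induction k with
    | zero => simp
    | succ k ih =>
      calc ‖x (k + 1) - xs‖ ≤ c * ‖x k - xs‖ := key k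
        _ ≤ c * (c ^ k * ‖x 0 - xs‖) := mul_le_mul_of_nonneg_left ih hc0
        _ = c ^ (k + 1) * ‖x 0 - xs‖ := by ring
  have h0 : Tendsto (fun k : ℕ => c ^ k * ‖x 0 - xs‖) atTop (nhds 0) := by
    have := (tendsto_pow_atTop_nhds_zero_of_lt_one hc0 hc1).mul_const ‖x 0 - xs‖
    simpa using this
  have hlim : Tendsto (fun k : ℕ => ‖x k - xs‖) atTop (nhds 0) :=
    squeeze_zero (fun k => norm_nonneg _) hbound h0
  rwa [tendsto_iff_norm_sub_tendsto_zero]
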